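/- Over F_2, let H = [[I, I, I],[I, P, Q]] where P, Q are N×N permutation matrices such that I, P, Q are pairwise non-overlapping (no two of them share a column). If PQ and QP have an overlapping column at position j, then the vector c = ((P+Q)e_j ; (I+Q)e_j ; (I+P)e_j), where e_j is the j-th standard basis vector, is a nonzero codeword of Hamming weight exactly 6 in the null space of H. -/
import Mathlib


/-- A permutation matrix over a ring `R`. -/
def IsPermMatrix {n : Type*} [Fintype n] [DecidableEq n] {R : Type*} [Semiring R]
    (M : Matrix n n R) : Prop :=
  ∃ σ : Equiv.Perm n, M = σ.permMatrix R

/-- Matrices `A` and `B` overlap if some column of `A` equals the corresponding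
column of `B`. -/
def Overlap {n : Type*} {R : Type*} (A B : Matrix n n R) : Prop :=
  ∃ j : n, ∀ i : n, A i j = B i j

lemma perm_entry {N : ℕ} (σ : Equiv.Perm (Fin N)) (i j : Fin N) :
    (σ.permMatrix (ZMod 2)) i j = if i = σ.symm j then 1 else 0 := by
  simp only [Equiv.Perm.permMatrix, PEquiv.toMatrix_apply, Equiv.toPEquiv_apply,
    Option.mem_def, Option.some.injEq]
  congr 1
  rw [Equiv.eq_symm_apply]

lemma two_support {N : ℕ} (a b : Fin N) (hab : a ≠ b) (f : Fin N → ZMod 2)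
    (hf : ∀ i, f i = (if i = a then 1 else 0) + (if i = b then 1 else 0)) :
    (∑ i : Fin N, if f i ≠ 0 then (1 : ℕ) else 0) = 2 := by
  have key : ∀ i, (if f i ≠ 0 then (1 : ℕ) else 0)
      = (if i = a then 1 else 0) + (if i = b then 1 else 0) := by
    intro i
    rcases eq_or_ne i a with h1 | h1 <;> rcases eq_or_ne i b with h2 | h2 <;>
      simp_all [hf i]
  rw [Finset.sum_congr rfl (fun i _ => key i), Finset.sum_add_distrib]
  simp

lemma zmod2_six (p q r : ZMod 2) : (p + q) + ((p + r) + (q + r)) = 0 := by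
  revert p q r; decide

/-- Over `F_2`, with `H = [[I,I,I],[I,P,Q]]` where `I, P, Q` are pairwise
non-overlapping permutation matrices, if `PQ` and `QP` overlap at column `j`,
then `c = ((P+Q)e_j ; (I+Q)e_j ; (I+P)e_j)` is a nonzero codeword of Hamming
weight exactly 6 in the null space of `H`. -/
theorem weight_six_codeword (N : ℕ)
    (P Q : Matrix (Fin N) (Fin N) (ZMod 2))
    (hP : IsPermMatrix P) (hQ : IsPermMatrix Q)
    (hIP : ¬ Overlap (1 : Matrix (Fin N) (Fin N) (ZMod 2)) P)
    (hIQ : ¬ Overlap (1 : Matrix (Fin N) (Fin N) (ZMod 2)) Q)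
    (hPQ : ¬ Overlap P Q)
    (j : Fin N) (hover : ∀ i : Fin N, (P * Q) i j = (Q * P) i j) :
    let e : Fin N → ZMod 2 := Pi.single j 1
    let H : Matrix (Fin N ⊕ Fin N) (Fin N ⊕ (Fin N ⊕ Fin N)) (ZMod 2) :=
      Matrix.of fun i k =>
        match i, k with
        | Sum.inl a, Sum.inl b => (1 : Matrix (Fin N) (Fin N) (ZMod 2)) a b
        | Sum.inl a, Sum.inr (Sum.inl b) => (1 : Matrix (Fin N) (Fin N) (ZMod 2)) a b
        | Sum.inl a, Sum.inr (Sum.inr b) => (1 : Matrix (Fin N) (Fin N) (ZMod 2)) a b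
        | Sum.inr a, Sum.inl b => (1 : Matrix (Fin N) (Fin N) (ZMod 2)) a b
        | Sum.inr a, Sum.inr (Sum.inl b) => P a b
        | Sum.inr a, Sum.inr (Sum.inr b) => Q a b
    let c : Fin N ⊕ (Fin N ⊕ Fin N) → ZMod 2 :=
      Sum.elim ((P + Q).mulVec e)
        (Sum.elim ((1 + Q).mulVec e) ((1 + P).mulVec e))
    H.mulVec c = 0 ∧ c ≠ 0 ∧
      (Finset.univ.filter fun i => c i ≠ 0).card = 6 := by
  intro e H c
  obtain ⟨σ, rfl⟩ := hP
  obtain ⟨τ, rfl⟩ := hQ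
  have hone : ∀ i k : Fin N, (1 : Matrix (Fin N) (Fin N) (ZMod 2)) i k
      = if i = k then 1 else 0 := fun i k => Matrix.one_apply
  have haj : σ.symm j ≠ j := by
    intro h
    exact hIP ⟨j, fun i => by rw [hone, perm_entry, h]⟩
  have hbj : τ.symm j ≠ j := by
    intro h
    exact hIQ ⟨j, fun i => by rw [hone, perm_entry, h]⟩
  have hab : σ.symm j ≠ τ.symm j := by
    intro h
    exact hPQ ⟨j, fun i => by rw [perm_entry, perm_entry, h]⟩
  have hmv : ∀ (M : Matrix (Fin N) (Fin N) (ZMod 2)) (i : Fin N),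
      M.mulVec e i = M i j := by
    intro M i
    simp [e, Matrix.mulVec, dotProduct, Pi.single_apply]
  have hc1 : ∀ i, c (Sum.inl i)
      = (if i = σ.symm j then 1 else 0) + (if i = τ.symm j then 1 else 0) := by
    intro i
    simp only [c, Sum.elim_inl, hmv, Matrix.add_apply, perm_entry]
  have hc2 : ∀ i, c (Sum.inr (Sum.inl i))
      = (if i = j then 1 else 0) + (if i = τ.symm j then 1 else 0) := by
    intro i
    simp only [c, Sum.elim_inr, Sum.elim_inl, hmv, Matrix.add_apply, perm_entry, hone]
  have hc3 : ∀ i, c (Sum.inr (Sum.inr i))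
      = (if i = j then 1 else 0) + (if i = σ.symm j then 1 else 0) := by
    intro i
    simp only [c, Sum.elim_inr, hmv, Matrix.add_apply, perm_entry, hone]
  have hcard : (Finset.univ.filter fun i => c i ≠ 0).card = 6 := by
    rw [Finset.card_filter]
    rw [Fintype.sum_sum_type, Fintype.sum_sum_type]
    rw [two_support _ _ hab _ hc1, two_support _ _ (Ne.symm hbj) _ hc2,
      two_support _ _ (Ne.symm haj) _ hc3]
    norm_num
  refine ⟨?_, ?_, hcard⟩
  · funext i
    cases i with
    | inl a =>
      have hthis : (H.mulVec c) (Sum.inl a)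
          = c (Sum.inl a) + (c (Sum.inr (Sum.inl a)) + c (Sum.inr (Sum.inr a))) := by
        simp [H, Matrix.mulVec, dotProduct, Fintype.sum_sum_type,
          Matrix.one_apply, ite_mul, Finset.sum_ite_eq]
      rw [Pi.zero_apply, hthis, hc1, hc2, hc3]
      have : ∀ p q r : ZMod 2, (p + q) + ((r + q) + (r + p)) = 0 := by decide
      exact this _ _ _
    | inr a =>
      have hthis : (H.mulVec c) (Sum.inr a)
          = c (Sum.inl a) + (c (Sum.inr (Sum.inl (σ a))) + c (Sum.inr (Sum.inr (τ a)))) := by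
        simp [H, Matrix.mulVec, dotProduct, Fintype.sum_sum_type,
          Matrix.one_apply, Equiv.Perm.permMatrix, PEquiv.toMatrix_apply,
          Equiv.toPEquiv_apply, ite_mul, Finset.sum_ite_eq, Finset.sum_ite_eq']
      rw [Pi.zero_apply, hthis, hc1, hc2, hc3]
      -- key identity from hover
      have hmulPQ : (σ.permMatrix (ZMod 2) * τ.permMatrix (ZMod 2)) a j
          = τ.permMatrix (ZMod 2) (σ a) j := by
        rw [Matrix.mul_apply]
        simp only [Equiv.Perm.permMatrix, PEquiv.toMatrix_apply, Equiv.toPEquiv_apply,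
          Option.mem_def, Option.some.injEq, ite_mul, one_mul, zero_mul]
        rw [Finset.sum_ite_eq]
        simp
      have hmulQP : (τ.permMatrix (ZMod 2) * σ.permMatrix (ZMod 2)) a j
          = σ.permMatrix (ZMod 2) (τ a) j := by
        rw [Matrix.mul_apply]
        simp only [Equiv.Perm.permMatrix, PEquiv.toMatrix_apply, Equiv.toPEquiv_apply,
          Option.mem_def, Option.some.injEq, ite_mul, one_mul, zero_mul]
        rw [Finset.sum_ite_eq]
        simp
      have hkey : (if σ a = τ.symm j then (1 : ZMod 2) else 0)
          = (if τ a = σ.symm j then (1 : ZMod 2) else 0) := by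
        have := hover a
        rw [hmulPQ, hmulQP, perm_entry, perm_entry] at this
        exact this
      have hs : (if σ a = j then (1 : ZMod 2) else 0) = (if a = σ.symm j then 1 else 0) := by
        simp [Equiv.apply_eq_iff_eq_symm_apply]
      have ht : (if τ a = j then (1 : ZMod 2) else 0) = (if a = τ.symm j then 1 else 0) := by
        simp [Equiv.apply_eq_iff_eq_symm_apply]
      rw [hkey, hs, ht]
      exact zmod2_six _ _ _
  · intro h
    have := hc1 (σ.symm j)
    rw [h] at this
    simp [hab] at this
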